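/- The elementary symmetric polynomial e_k evaluated at the Jucys-Murphy elements J_1,...,J_n equals the sum of all permutations in S_n having exactly n-k cycles: e_k(J_1,...,J_n) = Σ_{σ ∈ S_n, κ(σ)=n-k} σ, where κ(σ) is the number of cycles of σ (fixed points included). -/

import Mathlib

open Finset
open scoped Classical

/-- The Jucys-Murphy element `J_i = Σ_{j<i} (j i)` in the group algebra `ℤ[S_n]`. -/
noncomputable def JM (n : ℕ) (i : Fin n) : MonoidAlgebra ℤ (Equiv.Perm (Fin n)) :=
  ∑ j ∈ Finset.univ.filter (fun j : Fin n => j < i),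
    MonoidAlgebra.of ℤ (Equiv.Perm (Fin n)) (Equiv.swap j i)

/-- Evaluation of the elementary symmetric polynomial `e_k` at a family of
(pairwise commuting) elements: sum over strictly increasing sequences. -/
noncomputable def eEval {n : ℕ} {A : Type*} [Ring A] (k : ℕ) (g : Fin n → A) : A :=
  ∑ f ∈ Finset.univ.filter (fun f : Fin k → Fin n => StrictMono f),
    (List.ofFn (fun t => g (f t))).prod

/-- The number of cycles of a permutation, fixed points included. -/
def kappa {n : ℕ} (σ : Equiv.Perm (Fin n)) : ℕ :=
  σ.cycleType.card + (n - σ.cycleType.sum)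

section Aux

open Equiv Equiv.Perm

variable {α : Type*} [DecidableEq α] [Fintype α]

/-- Inserting a new point `a` into a cycle `c` right after `j` gives a cycle. -/
lemma insert_point_isCycle {c : Perm α} (hc : c.IsCycle) {j a : α}
    (hj : j ∈ c.support) (ha : a ∉ c.support) :
    (c * Equiv.swap j a).IsCycle ∧ (c * Equiv.swap j a).support = insert a c.support := by
  have hja : j ≠ a := fun h => ha (h ▸ hj)
  have hca : c a = a := by simpa using (Perm.notMem_support.mp ha)
  set d := c * Equiv.swap j a with hd
  have hdj : d j = a := by simp [hd, Equiv.swap_apply_left, hca]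
  have hda : d a = c j := by simp [hd, Equiv.swap_apply_right]
  have hdy : ∀ y, y ≠ j → y ≠ a → d y = c y := by
    intro y h1 h2; simp [hd, Equiv.swap_apply_of_ne_of_ne h1 h2]
  have hcj : c j ≠ j := Perm.mem_support.mp hj
  have hcja : c j ≠ a := fun h => ha (h ▸ (Perm.apply_mem_support.mpr hj))
  have hsupp : d.support = insert a c.support := by
    ext y
    rcases eq_or_ne y a with rfl | hya
    · simp [Perm.mem_support, hda, hcja]
    rcases eq_or_ne y j with rfl | hyj
    · simp [Perm.mem_support, hdj, Ne.symm hja, hj]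
    · simp [Perm.mem_support, hdy y hyj hya, hya]
  have key : ∀ t : ℕ, ∃ s : ℕ, (d ^ s) a = (c ^ t) (c j) := by
    intro t
    induction t with
    | zero => exact ⟨1, by simpa using hda⟩
    | succ t ih =>
      obtain ⟨s, hs⟩ := ih
      rcases eq_or_ne ((c ^ t) (c j)) j with hyj | hyj
      · exact ⟨1, by rw [pow_one, hda, pow_succ', Perm.mul_apply, hyj]⟩
      · have hymem : (c ^ t) (c j) ∈ c.support := Perm.pow_apply_mem_support.mpr
          (Perm.apply_mem_support.mpr hj)
        have hya : (c ^ t) (c j) ≠ a := fun h => ha (h ▸ hymem)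
        refine ⟨s + 1, ?_⟩
        rw [pow_succ', Perm.mul_apply, hs, hdy _ hyj hya, pow_succ', Perm.mul_apply]
  have reach : ∀ y ∈ c.support, Perm.SameCycle d a y := by
    intro y hy
    have h1 : Perm.SameCycle c (c j) y :=
      hc.sameCycle (Perm.mem_support.mp (Perm.apply_mem_support.mpr hj)) (Perm.mem_support.mp hy)
    obtain ⟨t, -, -, ht⟩ := h1.exists_pow_eq c
    obtain ⟨s, hs⟩ := key t
    exact ⟨(s : ℤ), by rw [zpow_natCast, hs, ht]⟩
  constructor
  · refine ⟨a, by rw [hda]; exact hcja, fun y hy => ?_⟩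
    rcases eq_or_ne y a with rfl | hya
    · exact Perm.SameCycle.refl _ _
    · have : y ∈ c.support := by
        by_contra hyc
        have hyj : y ≠ j := fun h => hyc (h ▸ hj)
        rw [hdy y hyj hya] at hy
        exact hyc (Perm.mem_support.mpr hy)
      exact reach y this
  · exact hsupp

lemma merge_cycleType {σ' : Perm α} {j a : α} (hja : j ≠ a) (ha : σ' a = a) :
    Multiset.card (σ' * Equiv.swap j a).cycleType + σ'.cycleType.sum + 1
      = Multiset.card σ'.cycleType + (σ' * Equiv.swap j a).cycleType.sum := by
  rcases eq_or_ne (σ' j) j with hjf | hjm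
  · have hdisj : Perm.Disjoint σ' (Equiv.swap j a) := by
      intro x
      rcases eq_or_ne x j with rfl | hxj
      · exact Or.inl hjf
      rcases eq_or_ne x a with rfl | hxa
      · exact Or.inl ha
      · exact Or.inr (Equiv.swap_apply_of_ne_of_ne hxj hxa)
    rw [hdisj.cycleType_mul, (isCycle_swap hja).cycleType, card_support_swap hja]
    simp only [Multiset.card_add, Multiset.coe_singleton, Multiset.card_singleton,
      Multiset.sum_add, Multiset.sum_singleton]
    omega
  · set c := σ'.cycleOf j with hc
    have hjsupp : j ∈ σ'.support := Perm.mem_support.mpr hjm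
    have hcmem : c ∈ σ'.cycleFactorsFinset := Perm.cycleOf_mem_cycleFactorsFinset_iff.mpr hjsupp
    have hd : Perm.Disjoint (σ' * c⁻¹) c := Perm.disjoint_mul_inv_of_mem_cycleFactorsFinset hcmem
    have hcyc : Perm.IsCycle c := Perm.isCycle_cycleOf σ' hjm
    have hjc : j ∈ c.support := Perm.mem_support_cycleOf_iff.mpr ⟨Perm.SameCycle.refl _ _, hjsupp⟩
    have hac : a ∉ c.support := by
      intro h
      exact Perm.mem_support.mp (Perm.support_cycleOf_le σ' j h) ha
    obtain ⟨hdcyc, hdsupp⟩ := insert_point_isCycle hcyc hjc hac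
    have hca : c a = a := Perm.notMem_support.mp hac
    have hra : (σ' * c⁻¹) a = a := by
      have hia : c⁻¹ a = a := Equiv.Perm.inv_eq_iff_eq.mpr hca.symm
      rw [Perm.mul_apply, hia, ha]
    have hrd : Perm.Disjoint (σ' * c⁻¹) (c * Equiv.swap j a) := by
      intro x
      by_cases hx : x ∈ (c * Equiv.swap j a).support
      · rw [hdsupp] at hx
        rcases Finset.mem_insert.mp hx with rfl | hx
        · exact Or.inl hra
        · rcases hd x with h | h
          · exact Or.inl h
          · exact absurd h (Perm.mem_support.mp hx)
      · exact Or.inr (Perm.notMem_support.mp hx)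
    set r := σ' * c⁻¹ with hr
    have hfact : σ' * Equiv.swap j a = r * (c * Equiv.swap j a) := by
      rw [hr, ← mul_assoc, inv_mul_cancel_right]
    have hfact' : σ' = r * c := by rw [hr, inv_mul_cancel_right]
    rw [hfact, hrd.cycleType_mul, hdcyc.cycleType, hdsupp,
      Finset.card_insert_of_notMem hac]
    rw [hfact']
    rw [hd.cycleType_mul, hcyc.cycleType]
    simp only [Multiset.card_add, Multiset.coe_singleton, Multiset.card_singleton,
      Multiset.sum_add, Multiset.sum_singleton]
    omega

lemma sum_cycleType_le {n : ℕ} (σ : Perm (Fin n)) : σ.cycleType.sum ≤ n := by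
  rw [Perm.sum_cycleType]
  simpa using Finset.card_le_univ σ.support

lemma kappa_mul_swap {n : ℕ} {σ' : Equiv.Perm (Fin n)} {j a : Fin n}
    (hja : j ≠ a) (ha : σ' a = a) :
    kappa (σ' * Equiv.swap j a) + 1 = kappa σ' := by
  have h := merge_cycleType hja ha
  have h1 := _root_.sum_cycleType_le σ'
  have h2 := _root_.sum_cycleType_le (σ' * Equiv.swap j a)
  unfold kappa
  omega

lemma kappa_eq_iff {n : ℕ} {σ : Perm (Fin n)} : kappa σ = n ↔ σ = 1 := by
  constructor
  · intro h
    have h1 := _root_.sum_cycleType_le σ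
    have h2 : Multiset.card σ.cycleType * 2 ≤ σ.cycleType.sum := by
      simpa using Multiset.card_nsmul_le_sum (fun x hx => Perm.two_le_of_mem_cycleType hx)
    unfold kappa at h
    rw [← Perm.card_cycleType_eq_zero]
    omega
  · rintro rfl
    unfold kappa
    simp [Perm.cycleType_one]

lemma kappa_one (n : ℕ) : kappa (1 : Perm (Fin n)) = n := kappa_eq_iff.mpr rfl

/-- The equivalence between `Fin n` and the non-`last` elements of `Fin (n+1)`. -/
def lastEquiv (n : ℕ) : Fin n ≃ {x : Fin (n + 1) // x ≠ Fin.last n} where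
  toFun x := ⟨x.castSucc, (Fin.castSucc_lt_last x).ne⟩
  invFun y := ⟨y.1.val, lt_of_le_of_ne (Nat.lt_succ_iff.mp y.1.isLt)
    (fun h => y.2 (Fin.ext h))⟩
  left_inv x := by simp [Fin.ext_iff]
  right_inv y := by simp [Fin.ext_iff]

/-- Extension of a permutation of `Fin n` to `Fin (n+1)` fixing the last element. -/
noncomputable def phi (n : ℕ) : Perm (Fin n) →* Perm (Fin (n + 1)) :=
  Perm.extendDomainHom (lastEquiv n)

lemma phi_castSucc (n : ℕ) (σ : Perm (Fin n)) (x : Fin n) :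
    phi n σ (Fin.castSucc x) = Fin.castSucc (σ x) :=
  Perm.extendDomain_apply_image σ (lastEquiv n) x

lemma phi_last (n : ℕ) (σ : Perm (Fin n)) : phi n σ (Fin.last n) = Fin.last n :=
  Perm.extendDomain_apply_not_subtype σ (lastEquiv n) (by simp)

lemma phi_injective (n : ℕ) : Function.Injective (phi n) :=
  Perm.extendDomainHom_injective (lastEquiv n)

lemma phi_swap (n : ℕ) (x y : Fin n) :
    phi n (Equiv.swap x y) = Equiv.swap x.castSucc y.castSucc := by
  refine Equiv.ext fun z => ?_
  induction z using Fin.lastCases with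
  | last =>
    rw [phi_last]
    rw [Equiv.swap_apply_of_ne_of_ne (Fin.castSucc_lt_last x).ne' (Fin.castSucc_lt_last y).ne']
  | cast w =>
    rw [phi_castSucc]
    rcases eq_or_ne w x with rfl | hwx
    · rw [Equiv.swap_apply_left, Equiv.swap_apply_left]
    rcases eq_or_ne w y with rfl | hwy
    · rw [Equiv.swap_apply_right, Equiv.swap_apply_right]
    · rw [Equiv.swap_apply_of_ne_of_ne hwx hwy, Equiv.swap_apply_of_ne_of_ne
        (fun h => hwx (Fin.castSucc_injective n h)) (fun h => hwy (Fin.castSucc_injective n h))]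

lemma cycleType_phi (n : ℕ) (σ : Perm (Fin n)) : (phi n σ).cycleType = σ.cycleType :=
  Perm.cycleType_extendDomain (lastEquiv n)

lemma kappa_phi (n : ℕ) (σ : Perm (Fin n)) : kappa (phi n σ) = kappa σ + 1 := by
  have h1 := _root_.sum_cycleType_le σ
  unfold kappa
  rw [cycleType_phi]
  omega

lemma phi_surj (n : ℕ) (τ : Perm (Fin (n + 1))) (h : τ (Fin.last n) = Fin.last n) :
    ∃ σ : Perm (Fin n), phi n σ = τ := by
  have hstab : ∀ x : Fin (n + 1), x ≠ Fin.last n ↔ τ x ≠ Fin.last n := by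
    intro x
    constructor
    · intro hx hc
      exact hx (τ.injective (hc.trans h.symm))
    · intro hx hc
      exact hx (by rw [hc, h])
  refine ⟨((lastEquiv n).permCongr).symm (τ.subtypePerm (fun x => (hstab x).symm)), ?_⟩
  refine Equiv.ext fun z => ?_
  induction z using Fin.lastCases with
  | last => rw [phi_last, h]
  | cast w =>
    rw [phi_castSucc]
    have : Fin.castSucc (((lastEquiv n).permCongr).symm (τ.subtypePerm (fun x => (hstab x).symm)) w)
        = ((τ.subtypePerm (fun x => (hstab x).symm)) (lastEquiv n w) : {x : Fin (n+1) // x ≠ Fin.last n}).1 := by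
      rw [Equiv.permCongr_symm, Equiv.permCongr_apply]
      simp [lastEquiv, Fin.ext_iff]
    rw [this]
    rfl

noncomputable def iota (n : ℕ) :
    MonoidAlgebra ℤ (Perm (Fin n)) →+* MonoidAlgebra ℤ (Perm (Fin (n + 1))) :=
  MonoidAlgebra.mapDomainRingHom ℤ (phi n)

lemma iota_of (n : ℕ) (σ : Perm (Fin n)) :
    iota n (MonoidAlgebra.of ℤ (Perm (Fin n)) σ)
      = MonoidAlgebra.of ℤ (Perm (Fin (n + 1))) (phi n σ) := by
  simp [iota, MonoidAlgebra.of_apply, Finsupp.mapDomain_single]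

lemma iota_JM (n : ℕ) (i : Fin n) : iota n (JM n i) = JM (n + 1) (Fin.castSucc i) := by
  unfold JM
  rw [map_sum]
  refine Finset.sum_bij' (i := fun j _ => Fin.castSucc j)
    (j := fun j' hj' => j'.castPred (by
      simp only [Finset.mem_filter, Finset.mem_univ, true_and] at hj'
      exact (lt_of_lt_of_le hj' (Fin.castSucc_lt_last i).le).ne))
    ?_ ?_ ?_ ?_ ?_
  · intro j hj
    simp only [Finset.mem_filter, Finset.mem_univ, true_and] at hj ⊢
    exact Fin.castSucc_lt_castSucc_iff.mpr hj
  · intro j' hj'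
    simp only [Finset.mem_filter, Finset.mem_univ, true_and] at hj' ⊢
    simp only [Fin.lt_def, Fin.coe_castPred, Fin.coe_castSucc] at hj' ⊢
    exact hj'
  · intro j hj
    simp only [Fin.castPred_castSucc]
  · intro j' hj'
    simp only [Fin.castSucc_castPred]
  · intro j hj
    rw [iota_of, phi_swap]

lemma eEval_zero {n : ℕ} {A : Type*} [Ring A] (g : Fin n → A) : eEval 0 g = 1 := by
  unfold eEval
  have hfilter : Finset.univ.filter (fun f : Fin 0 → Fin n => StrictMono f) = Finset.univ :=
    Finset.filter_true_of_mem (fun f _ => fun {a b} h => a.elim0)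
  rw [hfilter]
  rw [Finset.sum_congr rfl (fun f _ => by rw [List.ofFn_zero, List.prod_nil])]
  simp

lemma eEval_of_gt {n k : ℕ} {A : Type*} [Ring A] (g : Fin n → A) (h : n < k) :
    eEval k g = 0 := by
  unfold eEval
  rw [Finset.filter_false_of_mem, Finset.sum_empty]
  intro f _ hf
  have := Fintype.card_le_of_embedding ⟨f, hf.injective⟩
  simp only [Fintype.card_fin] at this
  omega

lemma eEval_succ {n k : ℕ} {A : Type*} [Ring A] (g : Fin (n + 1) → A) :
    eEval (k + 1) g
      = eEval (k + 1) (fun i : Fin n => g i.castSucc)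
        + eEval k (fun i : Fin n => g i.castSucc) * g (Fin.last n) := by
  unfold eEval
  rw [← Finset.sum_filter_add_sum_filter_not
    (Finset.univ.filter (fun f : Fin (k+1) → Fin (n+1) => StrictMono f))
    (fun f => f (Fin.last k) = Fin.last n)]
  rw [add_comm]
  congr 1
  -- Part A : f (last) ≠ last
  · refine Finset.sum_bij'
      (i := fun f hf => fun t : Fin (k+1) =>
        (f t).castPred (by
          simp only [Finset.mem_filter, Finset.mem_univ, true_and] at hf
          have h1 : f t ≤ f (Fin.last k) := hf.1.monotone (Fin.le_last t)
          have h2 : f (Fin.last k) < Fin.last n :=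
            lt_of_le_of_ne (Fin.le_last _) hf.2
          exact (lt_of_le_of_lt h1 h2).ne))
      (j := fun h hh => fun t => (h t).castSucc)
      ?_ ?_ ?_ ?_ ?_
    · intro f hf
      simp only [Finset.mem_filter, Finset.mem_univ, true_and] at hf ⊢
      intro a b hab
      rw [Fin.castPred_lt_castPred_iff]
      exact hf.1 hab
    · intro h hh
      simp only [Finset.mem_filter, Finset.mem_univ, true_and] at hh ⊢
      constructor
      · intro a b hab
        rw [Fin.castSucc_lt_castSucc_iff]
        exact hh hab
      · exact (Fin.castSucc_lt_last _).ne
    · intro f hf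
      funext t
      simp only [Fin.castSucc_castPred]
    · intro h hh
      funext t
      simp only [Fin.castPred_castSucc]
    · intro f hf
      simp only [Fin.castSucc_castPred]
  -- Part B : f (last) = last
  · rw [Finset.sum_mul]
    refine Finset.sum_bij'
      (i := fun f hf => fun t : Fin k =>
        (f t.castSucc).castPred (by
          simp only [Finset.mem_filter, Finset.mem_univ, true_and] at hf
          exact (hf.2 ▸ hf.1 (Fin.castSucc_lt_last t)).ne))
      (j := fun h hh => Fin.snoc (fun s => (h s).castSucc) (Fin.last n))
      ?_ ?_ ?_ ?_ ?_
    · intro f hf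
      simp only [Finset.mem_filter, Finset.mem_univ, true_and] at hf ⊢
      intro a b hab
      rw [Fin.castPred_lt_castPred_iff]
      exact hf.1 (Fin.castSucc_lt_castSucc_iff.mpr hab)
    · intro h hh
      simp only [Finset.mem_filter, Finset.mem_univ, true_and] at hh ⊢
      constructor
      · rw [Fin.strictMono_iff_lt_succ]
        intro i
        rcases eq_or_ne i.succ (Fin.last k) with hlast | hlast
        · rw [hlast, Fin.snoc_last, Fin.snoc_castSucc]
          exact Fin.castSucc_lt_last _
        · have h1 : i.succ = Fin.castSucc (i.succ.castPred hlast) :=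
            (Fin.castSucc_castPred _ _).symm
          rw [h1, Fin.snoc_castSucc, Fin.snoc_castSucc]
          rw [Fin.castSucc_lt_castSucc_iff]
          refine hh ?_
          have := Fin.castSucc_lt_succ (i := i)
          rw [h1, Fin.castSucc_lt_castSucc_iff] at this
          exact this
      · exact Fin.snoc_last _ _
    · intro f hf
      simp only [Finset.mem_filter, Finset.mem_univ, true_and] at hf
      funext t
      induction t using Fin.lastCases with
      | last => simp only [Fin.snoc_last, hf.2]
      | cast s => simp only [Fin.snoc_castSucc, Fin.castSucc_castPred]
    · intro h hh
      funext s
      simp only [Fin.snoc_castSucc, Fin.castPred_castSucc]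
    · intro f hf
      simp only [Finset.mem_filter, Finset.mem_univ, true_and] at hf
      rw [List.ofFn_succ', List.prod_concat]
      simp only [Function.comp, Fin.castSucc_castPred, hf.2]

lemma iota_eEval (n k : ℕ) :
    iota n (eEval k (JM n)) = eEval k (fun i : Fin n => iota n (JM n i)) := by
  unfold eEval
  rw [map_sum]
  refine Finset.sum_congr rfl fun f _ => ?_
  rw [map_list_prod]
  congr 1
  rw [List.map_ofFn]
  rfl

lemma phi_swap_inv_last (n : ℕ) (σ : Perm (Fin n)) (j : Fin (n + 1)) :
    (phi n σ * Equiv.swap j (Fin.last n))⁻¹ (Fin.last n) = j := by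
  rw [mul_inv_rev, Equiv.Perm.mul_apply, ← map_inv, phi_last]
  rw [Equiv.swap_inv, Equiv.swap_apply_right]

end Aux

/-- `e_k(J_1,…,J_n)` is the sum of all permutations of `S_n` with exactly `n - k`
cycles (fixed points included). -/
theorem esymm_jucysMurphy (n k : ℕ) :
    eEval k (JM n) =
      ∑ σ ∈ Finset.univ.filter (fun σ : Equiv.Perm (Fin n) => (kappa σ : ℤ) = (n : ℤ) - k),
        MonoidAlgebra.of ℤ (Equiv.Perm (Fin n)) σ := by
  induction n generalizing k with
  | zero =>
    cases k with
    | zero =>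
      rw [eEval_zero]
      rw [show (Finset.univ.filter
          (fun σ : Equiv.Perm (Fin 0) => (kappa σ : ℤ) = ((0:ℕ) : ℤ) - ((0:ℕ):ℤ))) = {1} from ?_]
      · rw [Finset.sum_singleton, map_one]
      · ext σ
        simp [Subsingleton.elim σ 1, kappa_one]
    | succ m =>
      rw [eEval_of_gt _ (Nat.succ_pos m)]
      rw [Finset.filter_false_of_mem, Finset.sum_empty]
      intro σ _ hσ
      omega
  | succ n ih =>
    cases k with
    | zero =>
      rw [eEval_zero]
      rw [show (Finset.univ.filter
          (fun σ : Equiv.Perm (Fin (n+1)) =>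
            (kappa σ : ℤ) = ((n+1:ℕ) : ℤ) - ((0:ℕ):ℤ))) = {1} from ?_]
      · rw [Finset.sum_singleton, map_one]
      · ext σ
        simp only [Finset.mem_filter, Finset.mem_univ, true_and, Finset.mem_singleton]
        rw [← kappa_eq_iff]
        omega
    | succ m =>
      rw [eEval_succ (JM (n+1))]
      have hfun : (fun i : Fin n => JM (n + 1) i.castSucc) = fun i => iota n (JM n i) :=
        funext fun i => (iota_JM n i).symm
      rw [hfun, ← iota_eEval, ← iota_eEval, ih (m+1), ih m]
      rw [map_sum, map_sum]
      simp only [iota_of]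
      conv_rhs => rw [← Finset.sum_filter_add_sum_filter_not _
        (fun τ : Equiv.Perm (Fin (n+1)) => τ (Fin.last n) = Fin.last n) _]
      congr 1
      -- fixed part
      · refine Finset.sum_bij (i := fun σ _ => phi n σ) ?_ ?_ ?_ ?_
        · intro σ hσ
          simp only [Finset.mem_filter, Finset.mem_univ, true_and] at hσ ⊢
          refine ⟨?_, phi_last n σ⟩
          rw [kappa_phi]
          push_cast
          push_cast at hσ
          omega
        · intro a _ b _ h
          exact phi_injective n h
        · intro τ hτ
          simp only [Finset.mem_filter, Finset.mem_univ, true_and] at hτ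
          obtain ⟨σ, hσ⟩ := phi_surj n τ hτ.2
          refine ⟨σ, ?_, hσ⟩
          simp only [Finset.mem_filter, Finset.mem_univ, true_and]
          have := kappa_phi n σ
          rw [hσ] at this
          have hκ := hτ.1
          push_cast
          push_cast at hκ
          omega
        · intro σ hσ
          rfl
      -- moved part
      · unfold JM
        rw [Finset.sum_mul_sum]
        simp only [← map_mul (MonoidAlgebra.of ℤ (Equiv.Perm (Fin (n+1))))]
        rw [← Finset.sum_product']
        refine Finset.sum_bij
          (i := fun x _ => phi n x.1 * Equiv.swap x.2 (Fin.last n)) ?_ ?_ ?_ ?_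
        · intro x hx
          simp only [Finset.mem_product, Finset.mem_filter, Finset.mem_univ, true_and] at hx ⊢
          obtain ⟨hκ, hj⟩ := hx
          have hjne : x.2 ≠ Fin.last n := hj.ne
          have hfix : phi n x.1 (Fin.last n) = Fin.last n := phi_last n x.1
          have hmer := kappa_mul_swap hjne hfix
          have hkp := kappa_phi n x.1
          constructor
          · push_cast
            push_cast at hκ
            omega
          · rw [Equiv.Perm.mul_apply, Equiv.swap_apply_right]
            intro hcon
            exact hjne ((phi n x.1).injective (hcon.trans hfix.symm))
        · intro a ha b hb h
          have h2 : phi n a.1 * Equiv.swap a.2 (Fin.last n)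
              = phi n b.1 * Equiv.swap b.2 (Fin.last n) := h
          have hj : a.2 = b.2 := by
            have := congrArg (fun τ : Equiv.Perm (Fin (n+1)) => τ⁻¹ (Fin.last n)) h2
            simpa only [phi_swap_inv_last] using this
          rw [hj] at h2
          exact Prod.ext (phi_injective n (mul_right_cancel h2)) hj
        · intro τ hτ
          simp only [Finset.mem_filter, Finset.mem_univ, true_and] at hτ
          obtain ⟨hκ, hmove⟩ := hτ
          obtain ⟨j, hjdef⟩ : ∃ j, j = τ⁻¹ (Fin.last n) := ⟨_, rfl⟩
          have hjne : j ≠ Fin.last n := by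
            intro h
            apply hmove
            rw [hjdef] at h
            have := congrArg τ h
            rw [← Equiv.Perm.mul_apply, mul_inv_cancel, Equiv.Perm.one_apply] at this
            rw [← this]
          have hσ'fix : (τ * Equiv.swap j (Fin.last n)) (Fin.last n) = Fin.last n := by
            rw [Equiv.Perm.mul_apply, Equiv.swap_apply_right, hjdef,
              ← Equiv.Perm.mul_apply, mul_inv_cancel, Equiv.Perm.one_apply]
          obtain ⟨σ, hσ⟩ := phi_surj n _ hσ'fix
          refine ⟨(σ, j), ?_, ?_⟩
          · simp only [Finset.mem_product, Finset.mem_filter, Finset.mem_univ, true_and]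
            constructor
            · have hmer := kappa_mul_swap hjne hσ'fix
              rw [mul_assoc, Equiv.swap_mul_self, mul_one] at hmer
              have hkp := kappa_phi n σ
              rw [hσ] at hkp
              push_cast
              push_cast at hκ
              omega
            · exact lt_of_le_of_ne (Fin.le_last j) hjne
          · show phi n σ * Equiv.swap j (Fin.last n) = τ
            rw [hσ, mul_assoc, Equiv.swap_mul_self, mul_one]
        · intro x hx
          rfl
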